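/- For any integer s ≥ 1, the intersection of the ℓ₁-ball of radius √s and the ℓ₂-ball of radius 1 in ℝ^d is contained in the closure of the convex hull of the set of s-sparse vectors of ℓ₂-norm at most 3. That is, B₁(√s) ∩ B₂(1) ⊆ cl(conv(B₀(s) ∩ B₂(3))). -/

import Mathlib

open Finset Matrix

noncomputable def l1 {ι : Type*} [Fintype ι] (x : ι → ℝ) : ℝ := ∑ i, |x i|

noncomputable def l2 {ι : Type*} [Fintype ι] (x : ι → ℝ) : ℝ := Real.sqrt (∑ i, (x i) ^ 2)

open scoped Classical in
/-- `x` has at most `m` nonzero entries. -/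
def sparse {ι : Type*} [Fintype ι] (m : ℕ) (x : ι → ℝ) : Prop :=
  (Finset.univ.filter (fun i => x i ≠ 0)).card ≤ m

/-- Restricted Isometry Property at level `m` with constant `δ`. -/
def RIP {N d : ℕ} (A : Matrix (Fin N) (Fin d) ℝ) (m : ℕ) (δ : ℝ) : Prop :=
  ∀ x : Fin d → ℝ, sparse m x →
    (1 - δ) * (l2 x) ^ 2 ≤ (l2 (A.mulVec x)) ^ 2 ∧
    (l2 (A.mulVec x)) ^ 2 ≤ (1 + δ) * (l2 x) ^ 2

/-- Restriction of a vector to the coordinates in `S` (zero elsewhere). -/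
def restr {d : ℕ} (S : Finset (Fin d)) (x : Fin d → ℝ) : Fin d → ℝ :=
  fun i => if i ∈ S then x i else 0

open scoped Classical in
lemma exists_topset {d k : ℕ} (hk : k ≤ d) (z : Fin d → ℝ) :
    ∃ S : Finset (Fin d), S.card = k ∧ ∀ i ∉ S, ∀ j ∈ S, |z i| ≤ |z j| := by
  obtain ⟨S0, _, hS0card⟩ := Finset.exists_subset_card_eq (s := (Finset.univ : Finset (Fin d))) (n := k) (by simpa using hk)
  set F : Finset (Finset (Fin d)) := Finset.univ.filter (fun S => S.card = k) with hF
  have hFne : F.Nonempty := ⟨S0, by simp [hF, hS0card]⟩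
  obtain ⟨S, hSF, hmax⟩ := F.exists_max_image (fun S => ∑ i ∈ S, (z i)^2) hFne
  have hScard : S.card = k := by simpa [hF] using hSF
  refine ⟨S, hScard, ?_⟩
  intro i hi j hj
  have hiE : i ∉ S.erase j := fun h => hi (Finset.mem_of_mem_erase h)
  have hk1 : 1 ≤ k := hScard ▸ Finset.card_pos.2 ⟨j, hj⟩
  set S' := insert i (S.erase j) with hS'
  have hcard' : S'.card = k := by
    rw [hS', Finset.card_insert_of_notMem hiE, Finset.card_erase_of_mem hj, hScard]
    omega
  have hle := hmax S' (by simp [hF, hcard'])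
  have h1 : ∑ l ∈ S', (z l)^2 = (z i)^2 + ∑ l ∈ S.erase j, (z l)^2 :=
    Finset.sum_insert hiE
  have h2 : ∑ l ∈ S, (z l)^2 = (z j)^2 + ∑ l ∈ S.erase j, (z l)^2 :=
    (Finset.add_sum_erase _ _ hj).symm
  have hsq : (z i)^2 ≤ (z j)^2 := by simp only [h1, h2] at hle; linarith
  calc |z i| = Real.sqrt ((z i)^2) := (Real.sqrt_sq_eq_abs _).symm
    _ ≤ Real.sqrt ((z j)^2) := Real.sqrt_le_sqrt hsq
    _ = |z j| := Real.sqrt_sq_eq_abs _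

theorem stmt2 {d : ℕ} (s : ℕ) (hs : 1 ≤ s) :
    {x : Fin d → ℝ | l1 x ≤ Real.sqrt s} ∩ {x | l2 x ≤ 1} ⊆
      closure (convexHull ℝ ({x : Fin d → ℝ | sparse s x} ∩ {x | l2 x ≤ 3})) := by
  classical
  intro x hx
  obtain ⟨hx1, hx2⟩ := hx
  set T : Set (Fin d → ℝ) := {x | sparse s x} ∩ {x | l2 x ≤ 3} with hT
  have h0T : (0 : Fin d → ℝ) ∈ T := by
    constructor
    · show sparse s 0
      unfold sparse
      simp
    · show l2 0 ≤ 3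
      unfold l2
      simp
  rcases Nat.eq_zero_or_pos d with hd | hd
  · subst hd
    have hx0 : x = 0 := funext fun i => i.elim0
    rw [hx0]
    exact subset_closure (subset_convexHull ℝ T h0T)
  by_contra hxmem
  obtain ⟨f, u, hfb, hux⟩ := geometric_hahn_banach_closed_point
    ((convex_convexHull ℝ T).closure) isClosed_closure hxmem
  have hmemT : ∀ y ∈ T, f y < u := fun y hy =>
    hfb y (subset_closure (subset_convexHull ℝ T hy))
  set z : Fin d → ℝ := fun i => f (Pi.single i 1) with hz
  have hf : ∀ v : Fin d → ℝ, f v = ∑ i, v i * z i := by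
    intro v
    have hv : v = ∑ i, v i • (Pi.single i 1 : Fin d → ℝ) := by
      funext j
      rw [Finset.sum_apply]
      simp [Pi.single_apply]
    conv_lhs => rw [hv]
    rw [map_sum]
    simp [hz, smul_eq_mul, mul_comm]
  -- choose the top-k set
  obtain ⟨S, hScard, hSdom⟩ := exists_topset (min_le_right s d) z
  set r := Real.sqrt (∑ i ∈ S, (z i)^2) with hr
  have hr0 : 0 ≤ r := Real.sqrt_nonneg _
  have hQ0 : (0:ℝ) ≤ ∑ i ∈ S, (z i)^2 := Finset.sum_nonneg fun i _ => sq_nonneg _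
  have hrsq : r^2 = ∑ i ∈ S, (z i)^2 := Real.sq_sqrt hQ0
  have hSne : S.Nonempty := Finset.card_pos.1 (by rw [hScard]; exact le_min hs hd)
  have hx2sq : ∑ i, (x i)^2 ≤ 1 := by
    have hl2 : l2 x ≤ 1 := hx2
    unfold l2 at hl2
    have hnn : (0:ℝ) ≤ ∑ i, (x i)^2 := Finset.sum_nonneg fun i _ => sq_nonneg _
    have h := Real.sq_sqrt hnn
    nlinarith [Real.sqrt_nonneg (∑ i, (x i)^2)]
  -- bound on the S part
  have hb1 : ∑ i ∈ S, x i * z i ≤ r := by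
    have hCS := Finset.sum_mul_sq_le_sq_mul_sq S x z
    have hP : ∑ i ∈ S, (x i)^2 ≤ 1 :=
      le_trans (Finset.sum_le_sum_of_subset_of_nonneg (Finset.subset_univ S)
        (fun i _ _ => sq_nonneg _)) hx2sq
    nlinarith [sq_nonneg (∑ i ∈ S, x i * z i - r), sq_nonneg (∑ i ∈ S, x i * z i + r)]
  -- bound on the complement part
  have hb2 : ∑ i ∈ Sᶜ, x i * z i ≤ r := by
    rcases le_or_gt s d with hsd | hds
    · -- card S = s, small entries off S
      have hkS : S.card = s := by rw [hScard, min_eq_left hsd]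
      have hss : (0:ℝ) < Real.sqrt s := Real.sqrt_pos.2 (by positivity)
      have hzi : ∀ i ∈ Sᶜ, |z i| ≤ r / Real.sqrt s := by
        intro i hi
        have hiS : i ∉ S := Finset.mem_compl.1 hi
        have hsum : (s:ℝ) * (z i)^2 ≤ ∑ j ∈ S, (z j)^2 := by
          calc (s:ℝ) * (z i)^2 = ∑ _j ∈ S, (z i)^2 := by
                rw [Finset.sum_const, hkS, nsmul_eq_mul]
            _ ≤ ∑ j ∈ S, (z j)^2 := Finset.sum_le_sum fun j hj => by
                have := hSdom i hiS j hj
                nlinarith [abs_nonneg (z i), sq_abs (z i), sq_abs (z j)]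
        rw [le_div_iff₀ hss]
        have h1 : (|z i| * Real.sqrt s)^2 = (s:ℝ) * (z i)^2 := by
          rw [mul_pow, Real.sq_sqrt (by positivity : (0:ℝ) ≤ (s:ℕ))]
          rw [sq_abs]; ring
        nlinarith [mul_nonneg (abs_nonneg (z i)) hss.le, hrsq, hr0,
          sq_nonneg (|z i| * Real.sqrt s - r), sq_nonneg (|z i| * Real.sqrt s + r)]
      calc ∑ i ∈ Sᶜ, x i * z i ≤ ∑ i ∈ Sᶜ, |x i| * (r / Real.sqrt s) := by
            apply Finset.sum_le_sum
            intro i hi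
            calc x i * z i ≤ |x i * z i| := le_abs_self _
              _ = |x i| * |z i| := abs_mul _ _
              _ ≤ |x i| * (r / Real.sqrt s) :=
                  mul_le_mul_of_nonneg_left (hzi i hi) (abs_nonneg _)
        _ = (∑ i ∈ Sᶜ, |x i|) * (r / Real.sqrt s) := by rw [Finset.sum_mul]
        _ ≤ (∑ i, |x i|) * (r / Real.sqrt s) := by
            apply mul_le_mul_of_nonneg_right
            · exact Finset.sum_le_sum_of_subset_of_nonneg (Finset.subset_univ _)
                (fun i _ _ => abs_nonneg _)
            · positivity
        _ ≤ Real.sqrt s * (r / Real.sqrt s) := by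
            apply mul_le_mul_of_nonneg_right hx1 (by positivity)
        _ = r := by field_simp
    · -- S = univ
      have hSuniv : S = Finset.univ := Finset.eq_univ_of_card S (by rw [hScard, min_eq_right hds.le]; simp)
      rw [hSuniv, Finset.compl_univ]
      simpa using hr0
  have hfx : f x ≤ 2 * r := by
    rw [hf x, ← Finset.sum_add_sum_compl S (fun i => x i * z i)]
    linarith
  by_cases hrz : r = 0
  · -- z vanishes, take y = 0
    have hzS : ∀ j ∈ S, z j = 0 := by
      intro j hj
      have : ∑ i ∈ S, (z i)^2 = 0 := by
        have := hrsq; rw [hrz] at this; linarith [this]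
      have := (Finset.sum_eq_zero_iff_of_nonneg (fun i _ => sq_nonneg (z i))).1 this j hj
      exact pow_eq_zero_iff (n := 2) (by norm_num) |>.1 this
    have hzall : ∀ i, z i = 0 := by
      intro i
      by_cases hiS : i ∈ S
      · exact hzS i hiS
      · obtain ⟨j, hj⟩ := hSne
        have h1 := hSdom i hiS j hj
        rw [hzS j hj] at h1
        simpa using abs_eq_zero.1 (le_antisymm (by simpa using h1) (abs_nonneg _))
    have hfx0 : f x = 0 := by
      rw [hf x]; exact Finset.sum_eq_zero fun i _ => by rw [hzall i, mul_zero]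
    have := hmemT 0 h0T
    rw [map_zero] at this
    linarith
  · have hrpos : 0 < r := lt_of_le_of_ne hr0 (Ne.symm hrz)
    set y : Fin d → ℝ := (3 / r) • restr S z with hy
    have hysup : ∀ i, i ∉ S → y i = 0 := by
      intro i hiS
      simp [hy, restr, hiS]
    have hyT : y ∈ T := by
      constructor
      · show sparse s y
        unfold sparse
        calc (Finset.univ.filter (fun i => y i ≠ 0)).card ≤ S.card := by
              apply Finset.card_le_card
              intro i hi
              rw [Finset.mem_filter] at hi
              by_contra hiS
              exact hi.2 (hysup i hiS)
          _ ≤ s := by rw [hScard]; omega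
      · show l2 y ≤ 3
        unfold l2
        have hsum : ∑ i, (y i)^2 = 9 := by
          have h1 : ∀ i, (y i)^2 = (3/r)^2 * (if i ∈ S then (z i)^2 else 0) := by
            intro i
            by_cases hiS : i ∈ S <;> simp [hy, restr, hiS, mul_pow] <;> ring
          rw [Finset.sum_congr rfl (fun i _ => h1 i), ← Finset.mul_sum,
            Finset.sum_ite_mem, Finset.univ_inter, ← hrsq]
          field_simp
          norm_num
        rw [hsum]
        have h9 : Real.sqrt 9 = 3 := by
          rw [show (9:ℝ) = 3^2 by norm_num]
          exact Real.sqrt_sq (by norm_num)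
        rw [h9]
    have hfy : f y = 3 * r := by
      rw [hf y]
      have h1 : ∀ i, y i * z i = (3/r) * (if i ∈ S then (z i)^2 else 0) := by
        intro i
        by_cases hiS : i ∈ S <;> simp [hy, restr, hiS] <;> ring
      rw [Finset.sum_congr rfl (fun i _ => h1 i), ← Finset.mul_sum,
        Finset.sum_ite_mem, Finset.univ_inter, ← hrsq]
      field_simp
    have := hmemT y hyT
    rw [hfy] at this
    linarith
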